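/- For all integers n, j, k with 0 ≤ j ≤ n and k ≥ 0, one has 0 ≤ 1 − C(n,j)/C(n+k,j) ≤ kj/(n−j+1), where C(a,b) denotes the binomial coefficient. -/

import Mathlib

/-- For integers `0 ≤ j ≤ n` and `k ≥ 0`,
`0 ≤ 1 − C(n,j)/C(n+k,j) ≤ k j/(n−j+1)`. -/
theorem binom_ratio_bounds (n j k : ℕ) (hj : j ≤ n) :
    0 ≤ 1 - (n.choose j : ℝ) / ((n + k).choose j) ∧
    1 - (n.choose j : ℝ) / ((n + k).choose j) ≤
      (k : ℝ) * j / ((n : ℝ) - j + 1) := by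
  have hjn : (j:ℝ) ≤ n := by exact_mod_cast hj
  have hD0 : (0:ℝ) < (n:ℝ) - j + 1 := by linarith
  constructor
  · have h1 : (n.choose j : ℝ) ≤ ((n+k).choose j : ℝ) := by
      exact_mod_cast Nat.choose_le_choose j (Nat.le_add_right n k)
    have h2 : (0:ℝ) < ((n+k).choose j : ℝ) := by
      exact_mod_cast Nat.choose_pos (hj.trans (Nat.le_add_right n k))
    have := div_le_one_of_le₀ h1 h2.le
    linarith
  · induction k with
    | zero =>
      have h2 : (0:ℝ) < (n.choose j : ℝ) := by exact_mod_cast Nat.choose_pos hj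
      simp [div_self h2.ne']
    | succ k ih =>
      rw [← Nat.add_assoc]
      have hb0 : (0:ℝ) < ((n+k).choose j : ℝ) := by
        exact_mod_cast Nat.choose_pos (hj.trans (Nat.le_add_right n k))
      have hc0 : (0:ℝ) < ((n+k+1).choose j : ℝ) := by
        exact_mod_cast Nat.choose_pos (hj.trans (by omega : n ≤ n+k+1))
      have ha0 : (0:ℝ) ≤ (n.choose j : ℝ) := by positivity
      have hab : (n.choose j : ℝ) ≤ ((n+k).choose j : ℝ) := by
        exact_mod_cast Nat.choose_le_choose j (Nat.le_add_right n k)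
      have hM0 : (0:ℝ) < (n:ℝ)+k+1 := by positivity
      have hkey : ((n+k).choose j : ℝ) * ((n:ℝ)+k+1) =
          ((n+k+1).choose j : ℝ) * ((n:ℝ)+k+1-j) := by
        have h := Nat.choose_mul_succ_eq (n+k) j
        have hj' : j ≤ n + k + 1 := by omega
        have h2 := congrArg (fun x : ℕ => (x:ℝ)) h
        push_cast [Nat.cast_sub hj'] at h2
        linarith [h2]
      have hbc : ((n+k).choose j : ℝ) / ((n+k+1).choose j : ℝ)
          = ((n:ℝ)+k+1-j)/((n:ℝ)+k+1) := by
        field_simp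
        linarith [hkey]
      have hx1 : (n.choose j : ℝ) / ((n+k).choose j : ℝ) ≤ 1 :=
        div_le_one_of_le₀ hab hb0.le
      have hx0 : (0:ℝ) ≤ (n.choose j : ℝ) / ((n+k).choose j : ℝ) := by positivity
      have hy : 1 - ((n+k).choose j : ℝ) / ((n+k+1).choose j : ℝ)
          = (j:ℝ)/((n:ℝ)+k+1) := by
        rw [hbc]; field_simp; ring
      have h1y0 : (0:ℝ) ≤ 1 - ((n+k).choose j : ℝ) / ((n+k+1).choose j : ℝ) := by
        rw [hy]; positivity
      have hyD : (j:ℝ)/((n:ℝ)+k+1) ≤ (j:ℝ)/((n:ℝ)-j+1) := by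
        gcongr
        linarith
      have hac : (n.choose j : ℝ) / ((n+k).choose j : ℝ)
            * (((n+k).choose j : ℝ) / ((n+k+1).choose j : ℝ))
          = (n.choose j : ℝ) / ((n+k+1).choose j : ℝ) := by
        field_simp
      push_cast
      have hsplit : ((k:ℝ)+1)*j/((n:ℝ)-j+1)
          = (k:ℝ)*j/((n:ℝ)-j+1) + (j:ℝ)/((n:ℝ)-j+1) := by ring
      rw [hsplit, ← hac]
      nlinarith [ih, hyD, hy, mul_nonneg (by linarith : (0:ℝ) ≤ 1 - (n.choose j : ℝ) / ((n+k).choose j : ℝ)) h1y0]
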